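/- Any NFA whose language equals L_k(n) = { w ∈ [n]^k : the k symbols of w are pairwise distinct } has at least 2^k states (for k ≤ n). -/

import Mathlib

private lemma evalFrom_append' {α σ : Type*} (M : NFA α σ) (S : Set σ) (x y : List α) :
    M.evalFrom S (x ++ y) = M.evalFrom (M.evalFrom S x) y := by
  simp [NFA.evalFrom, List.foldl_append]

private lemma evalFrom_mono' {α σ : Type*} (M : NFA α σ) {S T : Set σ} (h : S ⊆ T)
    (x : List α) : M.evalFrom S x ⊆ M.evalFrom T x := by
  induction x generalizing S T with
  | nil => exact h
  | cons a x ih =>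
    refine ih ?_
    intro q hq
    rw [NFA.mem_stepSet] at hq ⊢
    obtain ⟨t, ht, h2⟩ := hq
    exact ⟨t, h ht, h2⟩

private lemma evalFrom_split' {α σ : Type*} (M : NFA α σ) (S : Set σ) (y : List α)
    {f : σ} (hf : f ∈ M.evalFrom S y) : ∃ p ∈ S, f ∈ M.evalFrom {p} y := by
  induction y generalizing S with
  | nil => exact ⟨f, hf, by simp⟩
  | cons a y ih =>
    have : M.evalFrom S (a :: y) = M.evalFrom (M.stepSet S a) y := rfl
    rw [this] at hf
    obtain ⟨q, hq, hfq⟩ := ih _ hf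
    rw [NFA.mem_stepSet] at hq
    obtain ⟨p, hp, hqp⟩ := hq
    refine ⟨p, hp, ?_⟩
    have : M.evalFrom {p} (a :: y) = M.evalFrom (M.stepSet {p} a) y := rfl
    rw [this]
    refine evalFrom_mono' M ?_ y hfq
    intro r hr
    rw [NFA.mem_stepSet]
    exact ⟨p, rfl, by simpa using hr ▸ hqp⟩

/-- Any NFA whose language is `L_k(n)`, the set of length-`k` words over `[n]`
with pairwise distinct symbols, has at least `2^k` states. -/
theorem nfa_for_Lk_lower_bound {σ : Type*} [Fintype σ] (k n : ℕ)
    (hk : 1 ≤ k) (hkn : k ≤ n) (M : NFA (Fin n) σ)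
    (hL : M.accepts = {w : List (Fin n) | w.length = k ∧ w.Nodup}) :
    2 ^ k ≤ Fintype.card σ := by
  classical
  set e : Fin k → Fin n := Fin.castLE hkn with he
  have einj : Function.Injective e := Fin.castLE_injective hkn
  set x : Finset (Fin k) → List (Fin n) := fun S => (S.sort (· ≤ ·)).map e with hx
  set y : Finset (Fin k) → List (Fin n) := fun S => (Sᶜ.sort (· ≤ ·)).map e with hy
  -- x S ++ y S is accepted
  have hmem : ∀ S : Finset (Fin k), x S ++ y S ∈ M.accepts := by
    intro S
    rw [hL]
    constructor
    · simp only [hx, hy, List.length_append, List.length_map, Finset.length_sort]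
      simpa using S.card_add_card_compl
    · rw [← List.map_append]
      refine List.Nodup.map einj ?_
      rw [List.nodup_append]
      refine ⟨S.sort_nodup _, Sᶜ.sort_nodup _, ?_⟩
      intro a ha b hb hab
      subst hab
      have h1 : a ∈ S := (Finset.mem_sort _).1 ha
      have h2 : a ∈ Sᶜ := (Finset.mem_sort _).1 hb
      exact (Finset.mem_compl.1 h2) h1
  -- extract a state for each S
  have key : ∀ S : Finset (Fin k), ∃ q, q ∈ M.evalFrom M.start (x S) ∧
      ∃ acc ∈ M.accept, acc ∈ M.evalFrom {q} (y S) := by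
    intro S
    obtain ⟨acc, hacc, hev⟩ := NFA.mem_accepts.1 (hmem S)
    rw [evalFrom_append'] at hev
    obtain ⟨q, hq, hq2⟩ := evalFrom_split' M _ _ hev
    exact ⟨q, hq, acc, hacc, hq2⟩
  choose f hf1 hf2 using key
  -- mixed words: if f S = f T then x T ++ y S accepted
  have hmix : ∀ S T : Finset (Fin k), f S = f T → x T ++ y S ∈ M.accepts := by
    intro S T hST
    obtain ⟨acc, hacc, hev⟩ := hf2 S
    rw [NFA.mem_accepts]
    refine ⟨acc, hacc, ?_⟩
    rw [evalFrom_append']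
    refine evalFrom_mono' M ?_ (y S) hev
    intro r hr
    simp only [Set.mem_singleton_iff] at hr
    subst hr
    rw [hST]
    exact hf1 T
  -- injectivity of f
  have finj : Function.Injective f := by
    intro S T hST
    have hST' : f T = f S := hST.symm
    have hmem1 := hmix S T hST
    rw [hL] at hmem1
    obtain ⟨hlen, hnd⟩ := hmem1
    -- card equality
    have hcards : T.card + Sᶜ.card = k := by
      simpa [hx, hy, List.length_append, List.length_map, Finset.length_sort] using hlen
    have hSk : S.card + Sᶜ.card = k := by simpa using S.card_add_card_compl
    have hcard : T.card = S.card := by omega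
    -- T ⊆ S
    have hsub : T ⊆ S := by
      intro a haT
      by_contra haS
      have ha1 : e a ∈ x T := List.mem_map_of_mem (f := e) ((Finset.mem_sort _).2 haT)
      have ha2 : e a ∈ y S :=
        List.mem_map_of_mem (f := e) ((Finset.mem_sort _).2 (Finset.mem_compl.2 haS))
      rw [List.nodup_append] at hnd
      exact hnd.2.2 _ ha1 _ ha2 rfl
    exact (Finset.eq_of_subset_of_card_le hsub hcard.ge).symm
  calc 2 ^ k = Fintype.card (Finset (Fin k)) := by simp
    _ ≤ Fintype.card σ := Fintype.card_le_of_injective f finj
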